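/- For any x ∈ ℝⁿ and σ > 0, every element y of the minimizer set of y ↦ σ‖y‖₀ + (1/2)‖y − x‖² satisfies: for each coordinate i, either y_i = 0 or y_i = x_i with |x_i| ≥ √(2σ); consequently ‖y‖₀ ≤ ‖x‖₀ (the hard-thresholding operator never increases the number of nonzero entries). -/

import Mathlib

open scoped Classical

/-- The ℓ₀ "norm": number of nonzero components. -/
noncomputable def l0norm {n : ℕ} (y : EuclideanSpace ℝ (Fin n)) : ℕ :=
  (Finset.univ.filter fun i => y i ≠ 0).card

theorem hard_thresholding_properties {n : ℕ} (σ : ℝ) (hσ : 0 < σ)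
    (x y : EuclideanSpace ℝ (Fin n))
    (hy : ∀ z : EuclideanSpace ℝ (Fin n),
      σ * (l0norm y : ℝ) + ‖y - x‖ ^ 2 / 2 ≤ σ * (l0norm z : ℝ) + ‖z - x‖ ^ 2 / 2) :
    (∀ i : Fin n, y i = 0 ∨ (y i = x i ∧ Real.sqrt (2 * σ) ≤ |x i|)) ∧
    l0norm y ≤ l0norm x := by
  set F : Fin n → ℝ → ℝ := fun j t => (if t ≠ 0 then σ else 0) + (t - x j) ^ 2 / 2 with hF
  have hobj : ∀ z : EuclideanSpace ℝ (Fin n),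
      σ * (l0norm z : ℝ) + ‖z - x‖ ^ 2 / 2 = ∑ j, F j (z j) := by
    intro z
    have h1 : (l0norm z : ℝ) = ∑ j, (if z j ≠ 0 then (1 : ℝ) else 0) := by
      simp [l0norm, Finset.card_filter]
    have h2 : ‖z - x‖ ^ 2 = ∑ j, (z j - x j) ^ 2 := by
      rw [EuclideanSpace.norm_eq, Real.sq_sqrt (by positivity)]
      simp [sq_abs]
    rw [h1, h2, Finset.mul_sum, Finset.sum_div, ← Finset.sum_add_distrib]
    refine Finset.sum_congr rfl fun j _ => ?_
    simp [hF, mul_ite]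
  have key : ∀ (i : Fin n) (c : ℝ), F i (y i) ≤ F i c := by
    intro i c
    have h := hy (WithLp.toLp 2 (Function.update y i c))
    rw [hobj, hobj] at h
    simp only [WithLp.ofLp_toLp] at h
    have e1 : ∑ j, F j (Function.update y i c j)
        = F i c + ∑ j ∈ Finset.univ.erase i, F j (y j) := by
      have : ∀ j, F j (Function.update y i c j)
          = Function.update (fun k => F k (y k)) i (F i c) j := fun j =>
        Function.apply_update (fun k t => F k t) y i c j
      simp only [this]
      rw [Finset.sum_update_of_mem (Finset.mem_univ i), Finset.sdiff_singleton_eq_erase]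
    have e2 : ∑ j, F j (y j) = F i (y i) + ∑ j ∈ Finset.univ.erase i, F j (y j) := by
      rw [← Finset.sum_erase_add Finset.univ (fun j => F j (y j)) (Finset.mem_univ i), add_comm]
    rw [e1, e2] at h
    linarith
  have hcoord : ∀ i : Fin n, y i = 0 ∨ (y i = x i ∧ Real.sqrt (2 * σ) ≤ |x i|) := by
    intro i
    by_cases h0 : y i = 0
    · exact Or.inl h0
    right
    have hx : y i = x i := by
      by_cases hxi : x i = 0
      · exfalso
        have h2 := key i 0
        simp only [hF, h0, hxi, if_pos, ite_not, if_neg] at h2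
        simp at h2
        nlinarith [sq_nonneg (y i)]
      · have h := key i (x i)
        simp only [hF, h0, hxi, ite_not, if_neg] at h
        simp at h
        nlinarith [sq_nonneg (y i - x i)]
    refine ⟨hx, ?_⟩
    have h2 := key i 0
    simp only [hF, h0, ite_not, if_neg] at h2
    simp at h2
    rw [hx] at h2
    have h3 : 2 * σ ≤ |x i| ^ 2 := by rw [sq_abs]; nlinarith
    calc Real.sqrt (2 * σ) ≤ Real.sqrt (|x i| ^ 2) := Real.sqrt_le_sqrt h3
      _ = |x i| := Real.sqrt_sq (abs_nonneg _)
  refine ⟨hcoord, ?_⟩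
  apply Finset.card_le_card
  intro i hi
  simp only [Finset.mem_filter, Finset.mem_univ, true_and] at hi ⊢
  rcases hcoord i with h | ⟨h, _⟩
  · exact absurd h hi
  · rw [h] at hi; exact hi
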